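/- Let X : [0,1] → ℝ be a continuous nonnegative function with X(0) = X(1) = 0, and define m_X(s,t) = inf_{u ∈ [min(s,t), max(s,t)]} X(u). Then the kernel K(s,t) = m_X(s,t) is symmetric and positive semidefinite on [0,1] × [0,1]: for all n, all t_1, ..., t_n ∈ [0,1], and all real c_1, ..., c_n, Σ_{i,j} c_i c_j m_X(t_i, t_j) ≥ 0. -/
import Mathlib


open Set

/-- The running-infimum kernel `m_X(s,t) = inf_{u between s and t} X(u)`. -/
noncomputable def infKernel (X : ℝ → ℝ) (s t : ℝ) : ℝ :=
  sInf (X '' Set.uIcc s t)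

/-- Abstract positive semidefiniteness for symmetric kernels that are
nonnegative, diagonally dominant and satisfy the min-inequality. -/
private lemma psd_aux {ι : Type*} [DecidableEq ι] (c : ι → ℝ) :
    ∀ (n : ℕ) (s : Finset ι), s.card ≤ n → ∀ (K : ι → ι → ℝ),
      (∀ i ∈ s, ∀ j ∈ s, K i j = K j i) →
      (∀ i ∈ s, ∀ j ∈ s, 0 ≤ K i j) →
      (∀ i ∈ s, ∀ j ∈ s, K i j ≤ K i i) →
      (∀ i ∈ s, ∀ j ∈ s, ∀ k ∈ s, min (K i k) (K k j) ≤ K i j) →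
      0 ≤ ∑ i ∈ s, ∑ j ∈ s, c i * c j * K i j := by
  intro n
  induction n with
  | zero =>
    intro s hs K _ _ _ _
    rw [Finset.card_eq_zero.mp (Nat.le_zero.mp hs)]
    simp
  | succ n ih =>
    intro s hcard K hsym hnn hdiag htri
    rcases s.eq_empty_or_nonempty with rfl | hne
    · simp
    have hprod : (s ×ˢ s).Nonempty := hne.product hne
    obtain ⟨⟨i0, j0⟩, hij0, hb⟩ := Finset.exists_mem_eq_inf' hprod (fun p => K p.1 p.2)
    set b := (s ×ˢ s).inf' hprod (fun p => K p.1 p.2) with hbdef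
    rw [Finset.mem_product] at hij0
    obtain ⟨hi0, hj0⟩ := hij0
    have hble : ∀ i ∈ s, ∀ j ∈ s, b ≤ K i j := by
      intro i hi j hj
      have hm : (i, j) ∈ s ×ˢ s := Finset.mem_product.mpr ⟨hi, hj⟩
      exact Finset.inf'_le _ hm
    have hbnn : 0 ≤ b := by rw [hb]; exact hnn i0 hi0 j0 hj0
    set K' : ι → ι → ℝ := fun i j => K i j - b with hK'def
    have hsym' : ∀ i ∈ s, ∀ j ∈ s, K' i j = K' j i := by
      intro i hi j hj; simp only [hK'def]; rw [hsym i hi j hj]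
    have hnn' : ∀ i ∈ s, ∀ j ∈ s, 0 ≤ K' i j := by
      intro i hi j hj; simp only [hK'def]; exact sub_nonneg.mpr (hble i hi j hj)
    have hdiag' : ∀ i ∈ s, ∀ j ∈ s, K' i j ≤ K' i i := by
      intro i hi j hj; exact sub_le_sub_right (hdiag i hi j hj) b
    have htri' : ∀ i ∈ s, ∀ j ∈ s, ∀ k ∈ s, min (K' i k) (K' k j) ≤ K' i j := by
      intro i hi j hj k hk
      simp only [hK'def]
      rw [min_sub_sub_right]
      exact sub_le_sub_right (htri i hi j hj k hk) b
    have hsplit : ∑ i ∈ s, ∑ j ∈ s, c i * c j * K i j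
        = (∑ i ∈ s, ∑ j ∈ s, c i * c j * K' i j)
          + (∑ i ∈ s, c i) * (∑ i ∈ s, c i) * b := by
      rw [Finset.sum_mul_sum, Finset.sum_mul, ← Finset.sum_add_distrib]
      refine Finset.sum_congr rfl fun i _ => ?_
      rw [Finset.sum_mul, ← Finset.sum_add_distrib]
      refine Finset.sum_congr rfl fun j _ => ?_
      simp only [hK'def]; ring
    have hK'nonneg : 0 ≤ ∑ i ∈ s, ∑ j ∈ s, c i * c j * K' i j := by
      by_cases hdiagb : ∃ i ∈ s, K i i = b
      · -- a diagonal entry attains the minimum: its row and column vanish in K'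
        obtain ⟨i, hi, hKii⟩ := hdiagb
        have hrow : ∀ j ∈ s, K' i j = 0 ∧ K' j i = 0 := by
          intro j hj
          have h1 : K i j = b :=
            le_antisymm (le_of_le_of_eq (hdiag i hi j hj) hKii) (hble i hi j hj)
          have h2 : K j i = b := by rw [hsym j hj i hi]; exact h1
          constructor <;> simp [hK'def, h1, h2]
        have hred : ∑ i' ∈ s, ∑ j ∈ s, c i' * c j * K' i' j
            = ∑ i' ∈ s.erase i, ∑ j ∈ s.erase i, c i' * c j * K' i' j := by
          rw [← Finset.sum_erase_add s _ hi]
          have hz : ∑ j ∈ s, c i * c j * K' i j = 0 :=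
            Finset.sum_eq_zero fun j hj => by rw [(hrow j hj).1, mul_zero]
          rw [hz, add_zero]
          refine Finset.sum_congr rfl fun i' hi' => ?_
          rw [← Finset.sum_erase_add s _ hi,
            (hrow i' (Finset.mem_of_mem_erase hi')).2, mul_zero, add_zero]
        rw [hred]
        have hcard' : (s.erase i).card ≤ n := by
          have := Finset.card_erase_of_mem hi
          have h1 : 0 < s.card := Finset.card_pos.mpr hne
          omega
        exact ih (s.erase i) hcard' K'
          (fun a ha b hb => hsym' a (Finset.mem_of_mem_erase ha) b (Finset.mem_of_mem_erase hb))
          (fun a ha b hb => hnn' a (Finset.mem_of_mem_erase ha) b (Finset.mem_of_mem_erase hb))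
          (fun a ha b hb => hdiag' a (Finset.mem_of_mem_erase ha) b (Finset.mem_of_mem_erase hb))
          (fun a ha b hb k hk => htri' a (Finset.mem_of_mem_erase ha)
            b (Finset.mem_of_mem_erase hb) k (Finset.mem_of_mem_erase hk))
      · -- minimum attained strictly off the diagonal: split into two blocks
        push_neg at hdiagb
        have hddlt : ∀ i ∈ s, b < K i i := fun i hi =>
          lt_of_le_of_ne (hble i hi i hi) (Ne.symm (hdiagb i hi))
        set p : ι → Prop := fun k => b < K k i0 with hpdef
        set C := s.filter p with hCdef
        set D := s.filter (fun k => ¬ p k) with hDdef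
        have hCsub : C ⊆ s := Finset.filter_subset _ _
        have hDsub : D ⊆ s := Finset.filter_subset _ _
        have hi0C : i0 ∈ C := Finset.mem_filter.mpr ⟨hi0, hddlt i0 hi0⟩
        have hj0D : j0 ∈ D := by
          refine Finset.mem_filter.mpr ⟨hj0, ?_⟩
          simp only [hpdef, not_lt]
          rw [hsym j0 hj0 i0 hi0, ← hb]
        have hcross : ∀ k ∈ C, ∀ l ∈ D, K' k l = 0 ∧ K' l k = 0 := by
          intro k hk l hl
          obtain ⟨hks, hkp⟩ := Finset.mem_filter.mp hk
          obtain ⟨hls, hlp⟩ := Finset.mem_filter.mp hl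
          have hkl : K k l = b := by
            refine le_antisymm ?_ (hble k hks l hls)
            by_contra hgt
            push_neg at hgt
            apply hlp
            simp only [hpdef]
            calc b < min (K l k) (K k i0) := by
                  rw [hsym l hls k hks]
                  exact lt_min hgt hkp
              _ ≤ K l i0 := htri l hls i0 hi0 k hks
          have hlk : K l k = b := by rw [hsym l hls k hks]; exact hkl
          constructor <;> simp [hK'def, hkl, hlk]
        have hsplit2 : ∑ i ∈ s, ∑ j ∈ s, c i * c j * K' i j
            = (∑ i ∈ C, ∑ j ∈ C, c i * c j * K' i j)
              + (∑ i ∈ D, ∑ j ∈ D, c i * c j * K' i j) := by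
          rw [← Finset.sum_filter_add_sum_filter_not s p
            (fun i => ∑ j ∈ s, c i * c j * K' i j)]
          congr 1
          · refine Finset.sum_congr rfl fun i hi => ?_
            rw [← Finset.sum_filter_add_sum_filter_not s p (fun j => c i * c j * K' i j)]
            have : ∑ j ∈ D, c i * c j * K' i j = 0 :=
              Finset.sum_eq_zero fun j hj => by rw [(hcross i hi j hj).1, mul_zero]
            rw [← hCdef, ← hDdef, this, add_zero]
          · refine Finset.sum_congr rfl fun i hi => ?_
            rw [← Finset.sum_filter_add_sum_filter_not s p (fun j => c i * c j * K' i j)]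
            have : ∑ j ∈ C, c i * c j * K' i j = 0 :=
              Finset.sum_eq_zero fun j hj => by rw [(hcross j hj i hi).2, mul_zero]
            rw [← hCdef, ← hDdef, this, zero_add]
        have hCcard : C.card ≤ n := by
          have hlt : C.card < s.card :=
            Finset.card_lt_card ((Finset.ssubset_iff_of_subset hCsub).mpr
              ⟨j0, hj0, fun hj0C => (Finset.mem_filter.mp hj0D).2 (Finset.mem_filter.mp hj0C).2⟩)
          omega
        have hDcard : D.card ≤ n := by
          have hlt : D.card < s.card :=
            Finset.card_lt_card ((Finset.ssubset_iff_of_subset hDsub).mpr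
              ⟨i0, hi0, fun hi0D => (Finset.mem_filter.mp hi0D).2 (Finset.mem_filter.mp hi0C).2⟩)
          omega
        rw [hsplit2]
        have h1 := ih C hCcard K'
          (fun a ha b hb => hsym' a (hCsub ha) b (hCsub hb))
          (fun a ha b hb => hnn' a (hCsub ha) b (hCsub hb))
          (fun a ha b hb => hdiag' a (hCsub ha) b (hCsub hb))
          (fun a ha b hb k hk => htri' a (hCsub ha) b (hCsub hb) k (hCsub hk))
        have h2 := ih D hDcard K'
          (fun a ha b hb => hsym' a (hDsub ha) b (hDsub hb))
          (fun a ha b hb => hnn' a (hDsub ha) b (hDsub hb))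
          (fun a ha b hb => hdiag' a (hDsub ha) b (hDsub hb))
          (fun a ha b hb k hk => htri' a (hDsub ha) b (hDsub hb) k (hDsub hk))
        linarith
    rw [hsplit]
    have : 0 ≤ (∑ i ∈ s, c i) * (∑ i ∈ s, c i) * b :=
      mul_nonneg (mul_self_nonneg _) hbnn
    linarith

/-- **Positive semidefiniteness of the running-infimum kernel.** For a
continuous nonnegative `X : [0,1] → ℝ` with `X(0) = X(1) = 0`, the kernel
`m_X(s,t)` is symmetric and positive semidefinite on `[0,1] × [0,1]`. -/
theorem infKernel_posSemidef
    (X : ℝ → ℝ) (hX : ContinuousOn X (Set.Icc 0 1))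
    (hXnn : ∀ u ∈ Set.Icc (0:ℝ) 1, 0 ≤ X u)
    (hX0 : X 0 = 0) (hX1 : X 1 = 0) :
    (∀ s t : ℝ, infKernel X s t = infKernel X t s) ∧
    (∀ (n : ℕ) (t : Fin n → ℝ), (∀ i, t i ∈ Set.Icc (0:ℝ) 1) →
      ∀ c : Fin n → ℝ,
        0 ≤ ∑ i : Fin n, ∑ j : Fin n, c i * c j * infKernel X (t i) (t j)) := by
  constructor
  · intro s t
    unfold infKernel
    rw [Set.uIcc_comm]
  · intro n t ht c
    have hIcc : Set.Icc (0:ℝ) 1 = Set.uIcc 0 1 := (Set.uIcc_of_le zero_le_one).symm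
    have hsub : ∀ i j : Fin n, Set.uIcc (t i) (t j) ⊆ Set.Icc (0:ℝ) 1 := by
      intro i j
      rw [hIcc]
      exact Set.uIcc_subset_uIcc (hIcc ▸ ht i) (hIcc ▸ ht j)
    have hbdd : ∀ i j : Fin n, BddBelow (X '' Set.uIcc (t i) (t j)) := by
      intro i j
      refine ⟨0, ?_⟩
      rintro y ⟨u, hu, rfl⟩
      exact hXnn u (hsub i j hu)
    have hnon : ∀ i j : Fin n, (X '' Set.uIcc (t i) (t j)).Nonempty :=
      fun i j => Set.nonempty_uIcc.image X
    have hdiagval : ∀ i : Fin n, infKernel X (t i) (t i) = X (t i) := by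
      intro i
      unfold infKernel
      rw [Set.uIcc_self, Set.image_singleton, csInf_singleton]
    refine psd_aux c n Finset.univ (by simp) _ ?_ ?_ ?_ ?_
    · intro i _ j _
      unfold infKernel
      rw [Set.uIcc_comm]
    · intro i _ j _
      exact le_csInf (hnon i j) (by rintro y ⟨u, hu, rfl⟩; exact hXnn u (hsub i j hu))
    · intro i _ j _
      rw [hdiagval i]
      exact csInf_le (hbdd i j) ⟨t i, Set.left_mem_uIcc, rfl⟩
    · intro i _ j _ k _
      refine le_csInf (hnon i j) ?_
      rintro y ⟨u, hu, rfl⟩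
      rcases Set.uIcc_subset_uIcc_union_uIcc hu with h | h
      · exact le_trans (min_le_left _ _) (csInf_le (hbdd i k) ⟨u, h, rfl⟩)
      · exact le_trans (min_le_right _ _) (csInf_le (hbdd k j) ⟨u, h, rfl⟩)
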